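/- Let S be the Seidel matrix of a finite simple graph G on n ≥ 2 vertices. If G is regular of degree k and S has exactly two distinct eigenvalues, then G is strongly regular or complete or empty. -/

import Mathlib

open Matrix Finset

/-- The Seidel matrix `S = J - I - 2A` of a graph. -/
def SimpleGraph.seidel {V : Type*} [Fintype V] [DecidableEq V]
    (G : SimpleGraph V) [DecidableRel G.Adj] : Matrix V V ℝ :=
  Matrix.of (fun _ _ => (1 : ℝ)) - 1 - 2 • G.adjMatrix ℝ

theorem stmt_9 {V : Type*} [Fintype V] [DecidableEq V]
    (G : SimpleGraph V) [DecidableRel G.Adj]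
    (hn : 2 ≤ Fintype.card V) (k : ℕ) (hreg : G.IsRegularOfDegree k)
    (htwo : {μ : ℝ | ∃ x : V → ℝ, x ≠ 0 ∧ G.seidel.mulVec x = μ • x}.ncard = 2) :
    (∃ l m : ℕ, G.IsSRGWith (Fintype.card V) k l m) ∨ G = ⊤ ∨ G = ⊥ := by
  by_cases hbot : G = ⊥
  · exact Or.inr (Or.inr hbot)
  by_cases htop : G = ⊤
  · exact Or.inr (Or.inl htop)
  left
  set A : Matrix V V ℝ := G.adjMatrix ℝ with hA
  set Jm : Matrix V V ℝ := Matrix.of (fun _ _ => (1:ℝ)) with hJ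
  set S : Matrix V V ℝ := G.seidel with hS
  have hScard : ∀ v : V, (#(filter (fun x => G.Adj v x) univ) : ℝ) = (k:ℝ) := by
    intro v
    have := hreg v
    rw [SimpleGraph.degree, SimpleGraph.neighborFinset_eq_filter] at this
    exact_mod_cast congrArg (Nat.cast (R := ℝ)) this
  have hSexp : S = Jm - 1 - (2:ℝ) • A := by
    rw [hS]; unfold SimpleGraph.seidel
    rw [← hA, ← hJ]
    congr 1
    exact (Nat.cast_smul_eq_nsmul ℝ 2 A).symm
  have hSsymm : S.IsHermitian := by
    rw [Matrix.IsHermitian]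
    ext i j
    simp only [hSexp, Matrix.conjTranspose_apply, Matrix.sub_apply, Matrix.smul_apply,
      Matrix.one_apply, hJ, of_apply, hA, SimpleGraph.adjMatrix_apply, star_trivial]
    simp [G.adj_comm, eq_comm]
  -- two eigenvalues
  obtain ⟨r, s, hrs, hset⟩ := Set.ncard_eq_two.mp htwo
  have hev : ∀ j : V, hSsymm.eigenvalues j = r ∨ hSsymm.eigenvalues j = s := by
    intro j
    have h1 := hSsymm.mulVec_eigenvectorBasis j
    have h2 : (⇑(hSsymm.eigenvectorBasis j) : V → ℝ) ≠ 0 := by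
      intro h
      have hb := hSsymm.eigenvectorBasis.orthonormal.1 j
      rw [show hSsymm.eigenvectorBasis j = 0 from by simpa using h, norm_zero] at hb
      norm_num at hb
    have : hSsymm.eigenvalues j ∈ ({r, s} : Set ℝ) := by
      rw [← hset]
      exact ⟨_, h2, h1⟩
    simpa using this
  -- quadratic identity for S
  have key : S * S = (r + s) • S - (r * s) • (1 : Matrix V V ℝ) := by
    have hspec := hSsymm.spectral_theorem
    set U : Matrix V V ℝ := (hSsymm.eigenvectorUnitary : Matrix V V ℝ) with hU
    have hU1 : star U * U = 1 := (Matrix.mem_unitaryGroup_iff').mp hSsymm.eigenvectorUnitary.2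
    have hU2 : U * star U = 1 := (Matrix.mem_unitaryGroup_iff).mp hSsymm.eigenvectorUnitary.2
    set D : Matrix V V ℝ := diagonal (RCLike.ofReal ∘ hSsymm.eigenvalues) with hD
    have hspec' : S = U * D * star U := hspec.trans (Unitary.conjStarAlgAut_apply _ _)
    have hzero : D * D - (r + s) • D + (r * s) • (1 : Matrix V V ℝ) = 0 := by
      rw [hD, diagonal_mul_diagonal]
      ext i j
      rcases eq_or_ne i j with rfl | hne
      · simp only [Matrix.add_apply, Matrix.sub_apply, Matrix.smul_apply, diagonal_apply_eq,
          Matrix.one_apply_eq, Pi.mul_apply, Function.comp_apply, RCLike.ofReal_real_eq_id,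
          id_eq, smul_eq_mul, Matrix.zero_apply, mul_one]
        rcases hev i with h | h <;> rw [h] <;> ring
      · simp [Matrix.diagonal_apply_ne _ hne, Matrix.one_apply_ne hne]
    calc S * S = (U * D * star U) * (U * D * star U) := by rw [← hspec']
      _ = U * (D * D) * star U := by
          simp only [Matrix.mul_assoc]
          rw [← Matrix.mul_assoc (star U) U, hU1, Matrix.one_mul]
      _ = U * ((r + s) • D - (r * s) • (1 : Matrix V V ℝ)) * star U := by
          congr 2
          rw [← sub_eq_zero, ← hzero]
          module
      _ = (r + s) • (U * D * star U) - (r * s) • (U * star U) := by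
          rw [Matrix.mul_sub, Matrix.sub_mul, Matrix.mul_smul, Matrix.mul_smul, Matrix.smul_mul,
            Matrix.smul_mul, Matrix.mul_one]
      _ = (r + s) • S - (r * s) • (1 : Matrix V V ℝ) := by rw [← hspec', hU2]
  -- regularity facts
  have hAJ : A * Jm = (k:ℝ) • Jm := by
    ext i j
    simp only [mul_apply, hJ, of_apply, Matrix.smul_apply, smul_eq_mul, mul_one, hA,
      SimpleGraph.adjMatrix_apply]
    rw [Finset.sum_boole]
    exact hScard i
  have hJA : Jm * A = (k:ℝ) • Jm := by
    ext i j
    simp only [mul_apply, hJ, of_apply, Matrix.smul_apply, smul_eq_mul, mul_one, one_mul, hA,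
      SimpleGraph.adjMatrix_apply]
    rw [Finset.sum_boole]
    have hfe : filter (fun x => G.Adj x j) univ = filter (fun x => G.Adj j x) univ := by
      ext x; simp [G.adj_comm]
    rw [hfe]
    exact hScard j
  have hJJ : Jm * Jm = (Fintype.card V : ℝ) • Jm := by
    ext i j
    simp [mul_apply, hJ, Finset.card_univ]
  -- the A² identity
  set n : ℝ := (Fintype.card V : ℝ) with hncard
  have hAA : (4:ℝ) • (A * A) =
      (r + s - n + 2 + 4*(k:ℝ)) • Jm - (r + s + r*s + 1) • (1 : Matrix V V ℝ)
        - (2*(r+s) + 4) • A := by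
    have hexp : S * S = (n - 2 - 4*(k:ℝ)) • Jm + 1 + (4:ℝ) • A + (4:ℝ) • (A * A) := by
      rw [hSexp]
      simp only [Matrix.sub_mul, Matrix.mul_sub, Matrix.smul_mul, Matrix.mul_smul,
        Matrix.one_mul, Matrix.mul_one, hJJ, hAJ, hJA, smul_smul]
      module
    have := key
    rw [hexp, hSexp] at this
    linear_combination (norm := module) this
  -- common neighbours via A²
  have hcn : ∀ u v : V, (A * A) u v = (Fintype.card (G.commonNeighbors u v) : ℝ) := by
    intro u v
    rw [mul_apply]
    have hc : Fintype.card (G.commonNeighbors u v)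
        = #(filter (fun w => G.Adj u w ∧ G.Adj w v) univ) := by
      rw [← Set.toFinset_card]
      congr 1
      ext w
      simp [SimpleGraph.mem_commonNeighbors, G.adj_comm v w]
    rw [hc, ← Finset.sum_boole]
    congr 1
    funext w
    simp only [hA, SimpleGraph.adjMatrix_apply]
    by_cases h1 : G.Adj u w <;> by_cases h2 : G.Adj w v <;> simp [h1, h2]
  -- existence of adjacent and non-adjacent pairs
  have hadj : ∃ u v, G.Adj u v := by
    by_contra h
    push_neg at h
    exact hbot (by ext u v; simp [h u v])
  have hnadj : ∃ u v, u ≠ v ∧ ¬ G.Adj u v := by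
    by_contra h
    push_neg at h
    apply htop
    ext u v
    simp only [SimpleGraph.top_adj]
    exact ⟨fun h' => h'.ne, fun h' => h u v h'⟩
  obtain ⟨u₀, v₀, hadj₀⟩ := hadj
  obtain ⟨u₁, v₁, hne₁, hnadj₁⟩ := hnadj
  refine ⟨Fintype.card (G.commonNeighbors u₀ v₀), Fintype.card (G.commonNeighbors u₁ v₁),
    rfl, hreg, ?_, ?_⟩
  · intro v w hvw
    have e1 := congrFun (congrFun hAA v) w
    have e2 := congrFun (congrFun hAA u₀) v₀
    simp only [Matrix.smul_apply, Matrix.sub_apply, hJ, of_apply, smul_eq_mul, hA,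
      SimpleGraph.adjMatrix_apply, Matrix.one_apply_ne hvw.ne, Matrix.one_apply_ne hadj₀.ne,
      if_pos hvw, if_pos hadj₀, hcn v w, hcn u₀ v₀] at e1 e2
    have : (Fintype.card (G.commonNeighbors v w) : ℝ)
        = (Fintype.card (G.commonNeighbors u₀ v₀) : ℝ) := by
          rw [hA] at hcn; linarith [hcn v w, hcn u₀ v₀]
    exact_mod_cast this
  · intro v w hvw hnadjvw
    have e1 := congrFun (congrFun hAA v) w
    have e2 := congrFun (congrFun hAA u₁) v₁
    simp only [Matrix.smul_apply, Matrix.sub_apply, hJ, of_apply, smul_eq_mul, hA,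
      SimpleGraph.adjMatrix_apply, Matrix.one_apply_ne hvw, Matrix.one_apply_ne hne₁,
      if_neg hnadjvw, if_neg hnadj₁, hcn v w, hcn u₁ v₁] at e1 e2
    have : (Fintype.card (G.commonNeighbors v w) : ℝ)
        = (Fintype.card (G.commonNeighbors u₁ v₁) : ℝ) := by
          rw [hA] at hcn; linarith [hcn v w, hcn u₁ v₁]
    exact_mod_cast this
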